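/- Let R be an m×p real matrix, s, β̂ ∈ ℝ^p, λ ≥ 0, and let D be a p×p diagonal matrix with positive diagonal entries. Suppose μ* maximizes the dual objective μ ↦ −½ μᵀ R D⁻¹ Rᵀ μ + ⟨μ, R(β̂ − D⁻¹s)⟩ over the box {μ ∈ ℝ^m : ‖μ‖_∞ ≤ λ}. Then β* = β̂ − D⁻¹(s + Rᵀμ*) minimizes the primal h-subproblem objective β ↦ ⟨s, β⟩ + λ‖Rβ‖₁ + ½‖β − β̂‖²_D over ℝ^p. In particular, even if the dual maximizer μ* is not unique (e.g., when R is singular), the recovered β* is an optimal solution of the h-subproblem. -/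

import Mathlib

/-- if `μ*` maximizes the dual objective
`μ ↦ −½ μᵀRD⁻¹Rᵀμ + ⟨μ, R(β̂−D⁻¹s)⟩` over the box `{μ : ‖μ‖_∞ ≤ λ}`, then
`β* = β̂ − D⁻¹(s + Rᵀμ*)` minimizes the primal h-subproblem objective
`β ↦ ⟨s,β⟩ + λ‖Rβ‖₁ + ½‖β−β̂‖²_D` over `ℝ^p`. -/
theorem stmt11 {m p : ℕ} (R : Matrix (Fin m) (Fin p) ℝ)
    (s βhat : Fin p → ℝ) (lam : ℝ) (hlam : 0 ≤ lam)
    (d : Fin p → ℝ) (hd : ∀ j, 0 < d j)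
    (μstar : Fin m → ℝ) (hbox : ∀ i, |μstar i| ≤ lam)
    (hdualmax : ∀ μ : Fin m → ℝ, (∀ i, |μ i| ≤ lam) →
      -(1/2) * (∑ i, μ i
            * ((R * Matrix.diagonal (fun j => (d j)⁻¹) * R.transpose).mulVec μ) i)
          + (∑ i, μ i * (R.mulVec (fun j => βhat j - s j / d j)) i)
        ≤ -(1/2) * (∑ i, μstar i
            * ((R * Matrix.diagonal (fun j => (d j)⁻¹) * R.transpose).mulVec μstar) i)
          + (∑ i, μstar i * (R.mulVec (fun j => βhat j - s j / d j)) i))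
    (βstar : Fin p → ℝ)
    (hβstar : ∀ j, βstar j = βhat j - (s j + R.transpose.mulVec μstar j) / d j) :
    ∀ β : Fin p → ℝ,
      (∑ j, s j * βstar j) + lam * (∑ i, |R.mulVec βstar i|)
          + (1/2) * ∑ j, d j * (βstar j - βhat j)^2
        ≤ (∑ j, s j * β j) + lam * (∑ i, |R.mulVec β i|)
          + (1/2) * ∑ j, d j * (β j - βhat j)^2 := by
  intro β
  classical
  set u : Fin p → ℝ := R.transpose.mulVec μstar with hu
  have hu' : ∀ j, u j = ∑ i, R i j * μstar i := by
    intro j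
    simp [hu, Matrix.mulVec, dotProduct, Matrix.transpose_apply]
  have hkey : ∀ j, s j + u j = d j * (βhat j - βstar j) := by
    intro j
    have hdj := (hd j).ne'
    rw [hβstar j]
    field_simp
    ring
  -- quadratic form lemma
  have hQapp : ∀ i k : Fin m,
      (R * Matrix.diagonal (fun j => (d j)⁻¹) * R.transpose) i k
        = ∑ j, R i j * (d j)⁻¹ * R k j := by
    intro i k
    simp [Matrix.mul_apply, Matrix.diagonal_apply, Finset.sum_ite_eq, Finset.sum_mul]
  have hquad : ∀ a b : Fin m → ℝ,
      (∑ i, a i * ((R * Matrix.diagonal (fun j => (d j)⁻¹) * R.transpose).mulVec b) i)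
        = ∑ j, (d j)⁻¹ * (∑ i, R i j * a i) * (∑ k, R k j * b k) := by
    intro a b
    simp only [Matrix.mulVec, dotProduct, hQapp]
    simp only [Finset.sum_mul, Finset.mul_sum]
    conv_lhs => rw [show (∑ i : Fin m, ∑ k : Fin m, ∑ j : Fin p,
        a i * (R i j * (d j)⁻¹ * R k j * b k))
      = ∑ i : Fin m, ∑ j : Fin p, ∑ k : Fin m, a i * (R i j * (d j)⁻¹ * R k j * b k) from
        Finset.sum_congr rfl fun i _ => Finset.sum_comm]
    rw [Finset.sum_comm]
    refine Finset.sum_congr rfl fun j _ => ?_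
    rw [Finset.sum_comm]
    exact Finset.sum_congr rfl fun k _ => Finset.sum_congr rfl fun i _ => by ring
  set g : Fin m → ℝ := R.mulVec βstar with hg
  set b : Fin m → ℝ := R.mulVec (fun j => βhat j - s j / d j) with hb
  -- subgradient sign vector
  set ν : Fin m → ℝ := fun i => if 0 ≤ g i then lam else -lam with hν
  have hνbox : ∀ i, |ν i| ≤ lam := by
    intro i
    by_cases h : 0 ≤ g i <;> simp [hν, h, abs_of_nonneg hlam]
  set v : Fin m → ℝ := fun i => ν i - μstar i with hv
  set w : Fin p → ℝ := fun j => ∑ i, R i j * v i with hw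
  set C : ℝ := ∑ j, (d j)⁻¹ * (w j) ^ 2 with hC
  have hCnn : 0 ≤ C := by
    apply Finset.sum_nonneg
    intro j _
    exact mul_nonneg (inv_nonneg.mpr (hd j).le) (sq_nonneg _)
  set c : ℝ := ∑ i, v i * g i with hc
  -- the directional-derivative inequality: ∀ t ∈ [0,1], t * c ≤ t^2 / 2 * C
  have hdir : ∀ t : ℝ, 0 ≤ t → t ≤ 1 → t * c ≤ t ^ 2 / 2 * C := by
    intro t ht0 ht1
    have hμt : ∀ i, |μstar i + t * v i| ≤ lam := by
      intro i
      have : μstar i + t * v i = (1 - t) * μstar i + t * ν i := by simp [hv]; ring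
      rw [this]
      calc |(1 - t) * μstar i + t * ν i| ≤ |(1 - t) * μstar i| + |t * ν i| := abs_add_le _ _
        _ = (1 - t) * |μstar i| + t * |ν i| := by
            rw [abs_mul, abs_mul, abs_of_nonneg (by linarith), abs_of_nonneg ht0]
        _ ≤ (1 - t) * lam + t * lam := by
            have := hbox i; have := hνbox i
            have h1 : (1-t) * |μstar i| ≤ (1-t) * lam := by nlinarith
            have h2 : t * |ν i| ≤ t * lam := by nlinarith
            linarith
        _ = lam := by ring
    have hineq := hdualmax (fun i => μstar i + t * v i) hμt
    -- rewrite both quadratic terms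
    rw [hquad, hquad] at hineq
    have hRμt : ∀ j, (∑ i, R i j * (μstar i + t * v i)) = u j + t * w j := by
      intro j
      simp only [hu', hw, mul_add, Finset.sum_add_distrib, Finset.mul_sum]
      congr 1
      exact Finset.sum_congr rfl fun i _ => by ring
    simp only [hRμt] at hineq
    -- linear terms
    have hlin : (∑ i, (μstar i + t * v i) * b i) = (∑ i, μstar i * b i) + t * ∑ i, v i * b i := by
      simp only [add_mul, Finset.sum_add_distrib, Finset.mul_sum]
      congr 1
      exact Finset.sum_congr rfl fun i _ => by ring
    rw [hlin] at hineq
    -- expand squares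
    have hexp : (∑ j, (d j)⁻¹ * (u j + t * w j) * (u j + t * w j))
        = (∑ j, (d j)⁻¹ * u j * u j) + 2 * t * (∑ j, (d j)⁻¹ * u j * w j) + t ^ 2 * C := by
      simp only [hC, Finset.mul_sum]
      rw [← Finset.sum_add_distrib, ← Finset.sum_add_distrib]
      exact Finset.sum_congr rfl fun j _ => by ring
    rw [hexp] at hineq
    have hqs : (∑ j, ((d j)⁻¹ * ∑ i, R i j * μstar i) * ∑ i, R i j * μstar i)
        = ∑ j, (d j)⁻¹ * u j * u j :=
      Finset.sum_congr rfl fun j _ => by rw [hu']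
    rw [hqs] at hineq
    -- identify c = ∑ v b - ∑ (d j)⁻¹ u w
    have hgb : ∀ i, g i = b i - ∑ j, R i j * ((d j)⁻¹ * u j) := by
      intro i
      simp only [hg, hb, Matrix.mulVec, dotProduct, ← Finset.sum_sub_distrib]
      refine Finset.sum_congr rfl fun j _ => ?_
      rw [hβstar j]
      have hdj := (hd j).ne'
      field_simp
      ring
    have hcvb : c = (∑ i, v i * b i) - ∑ j, (d j)⁻¹ * u j * w j := by
      simp only [hc, hgb, mul_sub, Finset.sum_sub_distrib]
      congr 1
      simp only [hw, Finset.mul_sum]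
      rw [Finset.sum_comm]
      exact Finset.sum_congr rfl fun j _ => Finset.sum_congr rfl fun i _ => by ring
    have htc : t * c = t * (∑ i, v i * b i) - t * (∑ j, (d j)⁻¹ * u j * w j) := by
      rw [hcvb]; ring
    nlinarith [hineq, htc]
  -- conclude c ≤ 0
  have hcle : c ≤ 0 := by
    by_contra hpos
    push_neg at hpos
    rcases eq_or_lt_of_le hCnn with hC0 | hC0
    · have := hdir 1 zero_le_one le_rfl
      rw [← hC0] at this
      nlinarith
    · set t : ℝ := min 1 (c / C) with htdef
      have ht0 : 0 < t := lt_min one_pos (div_pos hpos hC0)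
      have ht1 : t ≤ 1 := min_le_left _ _
      have htC : t * C ≤ c := by
        have : t ≤ c / C := min_le_right _ _
        calc t * C ≤ (c / C) * C := by nlinarith
          _ = c := by field_simp
      have := hdir t ht0.le ht1
      nlinarith
  -- complementarity: lam * ∑ |g i| ≤ ∑ μstar i * g i
  have hcomp : lam * (∑ i, |g i|) ≤ ∑ i, μstar i * g i := by
    have hνg : (∑ i, ν i * g i) = lam * ∑ i, |g i| := by
      rw [Finset.mul_sum]
      refine Finset.sum_congr rfl fun i _ => ?_
      simp only [hν]
      by_cases h : 0 ≤ g i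
      · rw [if_pos h, abs_of_nonneg h]
      · rw [if_neg h, abs_of_neg (not_le.mp h)]; ring
    have : c = (∑ i, ν i * g i) - ∑ i, μstar i * g i := by
      simp only [hc, hv, sub_mul, Finset.sum_sub_distrib]
    rw [this, hνg] at hcle
    linarith
  -- swap lemma: ∑ i μ* (Rx)_i = ∑ j u_j x_j
  have hswap : ∀ x : Fin p → ℝ, (∑ i, μstar i * (R.mulVec x) i) = ∑ j, u j * x j := by
    intro x
    simp only [Matrix.mulVec, dotProduct, hu', Finset.mul_sum, Finset.sum_mul]
    rw [Finset.sum_comm]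
    exact Finset.sum_congr rfl fun j _ => Finset.sum_congr rfl fun i _ => by ring
  have h1 : lam * (∑ i, |g i|) ≤ ∑ j, u j * βstar j := by
    rw [← hswap βstar]; exact hcomp
  have h2 : (∑ j, u j * β j) ≤ lam * ∑ i, |R.mulVec β i| := by
    rw [← hswap β, Finset.mul_sum]
    refine Finset.sum_le_sum fun i _ => ?_
    calc μstar i * R.mulVec β i ≤ |μstar i * R.mulVec β i| := le_abs_self _
      _ = |μstar i| * |R.mulVec β i| := abs_mul _ _
      _ ≤ lam * |R.mulVec β i| := by
          have := hbox i; have := abs_nonneg (R.mulVec β i); nlinarith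
  have h3 : (∑ j, (s j * βstar j + u j * βstar j + (1/2) * (d j * (βstar j - βhat j) ^ 2)))
      ≤ ∑ j, (s j * β j + u j * β j + (1/2) * (d j * (β j - βhat j) ^ 2)) := by
    refine Finset.sum_le_sum fun j _ => ?_
    have hk := hkey j
    have hdj := hd j
    have e1 : 0 ≤ d j * (β j - βstar j) ^ 2 := mul_nonneg hdj.le (sq_nonneg _)
    have e2 : (s j + u j) * (β j - βstar j)
        = d j * (βhat j - βstar j) * (β j - βstar j) := by rw [hk]
    nlinarith [e1, e2]
  simp only [Finset.sum_add_distrib, ← Finset.mul_sum] at h3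
  linarith
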